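/- arXiv:1501.07858 — 2 statements merged into one kernel-verified Lean document; each statement's English description precedes it below -/
import Mathlib

section
/- If all entries of x ∈ ℝ^{h+1} are pairwise distinct, then the ordinal pattern of the reflected vector (-x_0, ..., -x_h) equals the reversal (r_h, r_{h-1}, ..., r_0) of the ordinal pattern (r_0, ..., r_h) of x. -/
/-- `r` is the ordinal pattern of `x = (x_0, ..., x_h)`. -/
def IsOrdinalPattern {h : ℕ} (x : Fin (h + 1) → ℝ) (r : Equiv.Perm (Fin (h + 1))) : Prop :=
  (∀ j k : Fin (h + 1), j ≤ k → x (r k) ≤ x (r j)) ∧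
  (∀ j : Fin h, x (r j.castSucc) = x (r j.succ) → r j.succ < r j.castSucc)

/-- if the entries of `x` are pairwise distinct and `r = (r_0,...,r_h)` is the
ordinal pattern of `x`, then the ordinal pattern of the reflected vector `(-x_0,...,-x_h)`
is the reversal `(r_h,...,r_0)` of `r`. -/
theorem ordinal_pattern_neg_eq_reverse {h : ℕ} (x : Fin (h + 1) → ℝ)
    (hx : Function.Injective x) (r : Equiv.Perm (Fin (h + 1)))
    (hr : IsOrdinalPattern x r) :
    IsOrdinalPattern (fun j => -x j) (Fin.revPerm.trans r) := by
  constructor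
  · intro j k hjk
    simp only [Equiv.trans_apply, Fin.revPerm_apply, neg_le_neg_iff]
    exact hr.1 _ _ (Fin.rev_le_rev.mpr hjk)
  · intro j heq
    exfalso
    simp only [Equiv.trans_apply, Fin.revPerm_apply, neg_inj] at heq
    exact absurd (r.injective (hx heq)) (by
      simp [Fin.rev_inj]
      exact (Fin.castSucc_lt_succ : j.castSucc < j.succ).ne)
end

section
/- For vectors x, x' ∈ ℝ^{h+1} with x = (x_0,...,x_h), x' = (x'_0,...,x'_h), and ε > 0: if Π(x) ≠ Π(x'), then either |x_j − x'_j| > ε for some j, or |x_j − x_k| ≤ 2ε for some j ≠ k. Equivalently, 1_{Π(x) ≠ Π(x')} ≤ Σ_{j=0}^h 1_{|x_j − x'_j| > ε} + Σ_{0 ≤ j ≠ k ≤ h} 1_{|x_j − x_k| ≤ 2ε}. -/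
open Classical in
/-- The ordinal pattern `Π(x)` of a vector `x ∈ ℝ^{h+1}`. -/
noncomputable def ordPat {h : ℕ} (x : Fin (h + 1) → ℝ) : Equiv.Perm (Fin (h + 1)) :=
  if hr : ∃ r, IsOrdinalPattern x r then hr.choose else Equiv.refl _

lemma isOrdinalPattern_unique {h : ℕ} {x : Fin (h + 1) → ℝ} (hx : Function.Injective x)
    {r r' : Equiv.Perm (Fin (h + 1))} (hr : IsOrdinalPattern x r)
    (hr' : IsOrdinalPattern x r') : r = r' := by
  set σ : Equiv.Perm (Fin (h + 1)) := r.trans r'.symm with hσ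
  have hmono : StrictMono σ := by
    intro j k hjk
    have h1 : x (r k) < x (r j) := by
      rcases lt_or_eq_of_le (hr.1 j k hjk.le) with h | h
      · exact h
      · exact absurd (r.injective (hx h)) hjk.ne'
    by_contra hle
    push_neg at hle
    have : x (r' (σ j)) ≤ x (r' (σ k)) := hr'.1 _ _ hle
    simp only [hσ, Equiv.trans_apply, Equiv.apply_symm_apply] at this
    exact absurd (h1.trans_le this) (lt_irrefl _)
  have hid : σ = Equiv.refl _ := by
    have hrange : Set.range (σ : Fin (h + 1) → Fin (h + 1)) =
        Set.range (id : Fin (h + 1) → Fin (h + 1)) := by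
      rw [σ.surjective.range_eq, Set.range_id]
    have hfun : (σ : Fin (h + 1) → Fin (h + 1)) = id :=
      (@StrictMono.range_inj (Fin (h + 1)) (Fin (h + 1)) (inferInstance : LinearOrder (Fin (h + 1)))
        inferInstance (inferInstance : WellFoundedLT (Fin (h + 1))) _ id hmono strictMono_id).1 hrange
    exact Equiv.ext fun i => congrFun hfun i
  have : r.trans r'.symm = Equiv.refl _ := hid
  calc r = (r.trans r'.symm).trans r' := by ext i; simp
    _ = r' := by rw [this]; ext i; simp

lemma isOrdinalPattern_exists {h : ℕ} (x : Fin (h + 1) → ℝ) (hx : Function.Injective x) :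
    ∃ r, IsOrdinalPattern x r := by
  refine ⟨Tuple.sort (fun i => -x i), ?_, ?_⟩
  · intro j k hjk
    have := Tuple.monotone_sort (fun i => -x i) hjk
    simpa using this
  · intro j hxy
    exfalso
    have : (Fin.castSucc j : Fin (h + 1)) = j.succ := (Tuple.sort _).injective (hx hxy)
    exact absurd this (Fin.castSucc_lt_succ : Fin.castSucc j < j.succ).ne

/-- if `Π(x) ≠ Π(x')` and `ε > 0`, then either some coordinate moved by
more than `ε`, or two coordinates of `x` are within `2ε` of each other. -/
theorem pattern_change_requires_big_move_or_near_tie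
    {h : ℕ} (x x' : Fin (h + 1) → ℝ) (ε : ℝ) (hε : 0 < ε)
    (hne : ordPat x ≠ ordPat x') :
    (∃ j, ε < |x j - x' j|) ∨ (∃ j k, j ≠ k ∧ |x j - x k| ≤ 2 * ε) := by
  by_contra hcon
  push_neg at hcon
  obtain ⟨hmove, htie⟩ := hcon
  -- all coordinates moved by at most ε, all pairs of x separated by more than 2ε
  have hsep : ∀ j k, j ≠ k → 2 * ε < |x j - x k| := fun j k hjk => (htie j k hjk)
  have hxinj : Function.Injective x := by
    intro j k hjk
    by_contra hne'
    have := hsep j k hne'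
    rw [hjk, sub_self, abs_zero] at this
    linarith
  -- x' is also injective and order-compatible with x
  have hx'lt : ∀ j k, x j < x k → j ≠ k → x' j < x' k := by
    intro j k hlt hjk
    have h1 := abs_sub_le_iff.1 (hmove j)
    have h2 := abs_sub_le_iff.1 (hmove k)
    have habs : |x j - x k| = x k - x j := by
      rw [abs_sub_comm]; exact abs_of_pos (by linarith)
    have h3 : 2 * ε < x k - x j := by
      have := hsep j k hjk; linarith [habs]
    obtain ⟨h1a, h1b⟩ := h1
    obtain ⟨h2a, h2b⟩ := h2
    linarith
  have hx'inj : Function.Injective x' := by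
    intro j k hjk
    by_contra hne'
    rcases lt_trichotomy (x j) (x k) with hlt | heq | hgt
    · exact absurd hjk (hx'lt j k hlt hne').ne
    · exact hne' (hxinj heq)
    · exact absurd hjk.symm (hx'lt k j hgt (Ne.symm hne')).ne
  obtain ⟨r, hr⟩ := isOrdinalPattern_exists x hxinj
  obtain ⟨r', hr'⟩ := isOrdinalPattern_exists x' hx'inj
  have hPx : IsOrdinalPattern x (ordPat x) := by
    rw [ordPat, dif_pos ⟨r, hr⟩]
    exact (Exists.choose_spec (⟨r, hr⟩ : ∃ r, IsOrdinalPattern x r))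
  have hPx' : IsOrdinalPattern x' (ordPat x') := by
    rw [ordPat, dif_pos ⟨r', hr'⟩]
    exact (Exists.choose_spec (⟨r', hr'⟩ : ∃ r, IsOrdinalPattern x' r))
  -- ordPat x is also an ordinal pattern of x'
  have hkey : IsOrdinalPattern x' (ordPat x) := by
    constructor
    · intro j k hjk
      rcases eq_or_ne (ordPat x j) (ordPat x k) with heq | hne'
      · rw [heq]
      · have hle : x (ordPat x k) ≤ x (ordPat x j) := hPx.1 j k hjk
        have hlt : x (ordPat x k) < x (ordPat x j) := by
          rcases lt_or_eq_of_le hle with h | h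
          · exact h
          · exact absurd (hxinj h) (Ne.symm hne')
        exact (hx'lt _ _ hlt (Ne.symm hne')).le
    · intro j hxy
      exfalso
      have : (Fin.castSucc j : Fin (h + 1)) = j.succ := (ordPat x).injective (hx'inj hxy)
      exact absurd this (Fin.castSucc_lt_succ : Fin.castSucc j < j.succ).ne
  exact hne (isOrdinalPattern_unique hx'inj hkey hPx')
end
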